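/- Let (J_n, w_n)_{n≥0} be an admissible sequence in the sense of Bédard (J_0 = J, J_n = J_{n-1} ∩ w_{n-1} δ(J_{n-1}) w_{n-1}^{-1}, each w_n minimal in W_{J_n} w_n W_{δ(J_n)}, and w_n ∈ W_{J_n} w_{n-1} W_{δ(J_{n-1})}), with eventual value w_∞. Then for every n ≥ 0, w_n is the unique minimal length element of the double coset W_J w_∞ W_{δ(J_n)} (where J = J_0). -/

import Mathlib

namespace CoxeterSystem

open List
open scoped Classical

variable {B W : Type*} [Group W] {M : CoxeterMatrix B} (cs : CoxeterSystem M W)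

local prefix:100 "s" => cs.simple
local prefix:100 "π" => cs.wordProd
local prefix:100 "ℓ" => cs.length
local prefix:100 "ris" => cs.rightInvSeq
local prefix:100 "lis" => cs.leftInvSeq

/-! ### The permutation representation on W × ZMod 2 (Bourbaki IV.1.4) -/

noncomputable def etaFun (i : B) : W × ZMod 2 → W × ZMod 2 :=
  fun p => (s i * p.1 * s i, p.2 + if p.1 = s i then 1 else 0)

theorem etaFun_involutive (i : B) : Function.Involutive (cs.etaFun i) := by
  intro p
  simp only [etaFun]
  ext
  · simp only
    rw [← mul_assoc, ← mul_assoc, cs.simple_mul_simple_self, one_mul, mul_assoc,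
      cs.simple_mul_simple_self, mul_one]
  · simp only
    rcases eq_or_ne p.1 (s i) with h | h
    · have h2 : s i * p.1 * s i = s i := by rw [h, cs.simple_mul_simple_self, one_mul]
      simp [h, h2, add_assoc, show (1:ZMod 2)+1 = 0 from rfl]
    · have h2 : s i * p.1 * s i ≠ s i := by
        intro hc
        apply h
        have h3 := congrArg (fun z => s i * z * s i) hc
        simpa [← mul_assoc, cs.simple_mul_simple_self, mul_assoc] using h3
      simp [h, h2]

noncomputable def eta (i : B) : Equiv.Perm (W × ZMod 2) := (cs.etaFun_involutive i).toPerm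

@[simp] theorem eta_apply (i : B) (p : W × ZMod 2) :
    cs.eta i p = (s i * p.1 * s i, p.2 + if p.1 = s i then 1 else 0) := rfl

noncomputable def phiWord (ω : List B) : Equiv.Perm (W × ZMod 2) := (ω.map cs.eta).prod

@[simp] theorem phiWord_nil : cs.phiWord [] = 1 := rfl

theorem phiWord_cons (i : B) (ω : List B) :
    cs.phiWord (i :: ω) = cs.eta i * cs.phiWord ω := by
  simp [phiWord]

theorem phiWord_apply (ω : List B) (t : W) (e : ZMod 2) :
    cs.phiWord ω (t, e) =
      (π ω * t * (π ω)⁻¹, e + (count t (ris ω) : ZMod 2)) := by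
  induction ω generalizing e with
  | nil => simp
  | cons i ω ih =>
    rw [phiWord_cons, Equiv.Perm.mul_apply, ih, eta_apply]
    have hcond : (π ω * t * (π ω)⁻¹ = s i) ↔ (t = (π ω)⁻¹ * s i * π ω) := by
      constructor
      · intro h; rw [← h]; group
      · intro h; rw [h]; group
    have hris : ris (i :: ω) = ((π ω)⁻¹ * s i * π ω) :: ris ω := rfl
    ext
    · simp only [wordProd_cons]
      rw [mul_inv_rev, cs.inv_simple]
      group
    · simp only [hris, count_cons]
      rcases eq_or_ne t ((π ω)⁻¹ * s i * π ω) with h | h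
      · rw [if_pos (hcond.mpr h), if_pos (by simp [h])]
        push_cast
        ring
      · rw [if_neg (fun hc => h (hcond.mp hc)),
          if_neg (by simp only [beq_iff_eq]; exact fun hc => h hc.symm)]
        push_cast
        ring

/-! ### Alternating words -/

theorem altWord_drop (i j : B) : ∀ n k, (alternatingWord i j n).drop k = alternatingWord i j (n - k) := by
  intro n
  induction n with
  | zero => intro k; simp [alternatingWord]
  | succ n ih =>
    intro k
    cases k with
    | zero => simp
    | succ k =>
      rw [alternatingWord_succ', List.drop_succ_cons, ih k]
      congr 1
      omega

theorem altWord_reverse (i j : B) :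
    ∀ n, (alternatingWord i j n).reverse =
      if Even n then alternatingWord j i n else alternatingWord i j n := by
  intro n
  induction n generalizing i j with
  | zero => simp [alternatingWord]
  | succ n ih =>
    rw [alternatingWord_succ' i j n, List.reverse_cons, ih i j]
    by_cases h : Even n
    · have h1 : ¬ Even (n + 1) := by simp [Nat.even_add_one, h]
      rw [if_pos h, if_pos h, if_neg h1, ← List.concat_eq_append,
        ← alternatingWord_succ i j n, alternatingWord_succ' i j n, if_pos h]
    · have h1 : Even (n + 1) := by simp [Nat.even_add_one, h]
      rw [if_neg h, if_neg h, if_pos h1, ← List.concat_eq_append,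
        ← alternatingWord_succ j i n, alternatingWord_succ' j i n, if_neg h]

theorem altWord_odd_palindrome (i j : B) (k : ℕ) :
    (alternatingWord i j (2 * k + 1)).reverse = alternatingWord i j (2 * k + 1) := by
  rw [altWord_reverse, if_neg (by simp [parity_simps])]

theorem altWord_split (i j : B) (k : ℕ) :
    alternatingWord i j (2 * k + 1) =
      (alternatingWord i j k).reverse ++ alternatingWord i j (k + 1) := by
  conv_lhs => rw [← List.take_append_drop k (alternatingWord i j (2 * k + 1))]
  congr 1
  · rw [← List.reverse_reverse (List.take k (alternatingWord i j (2 * k + 1))), List.reverse_take,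
      altWord_odd_palindrome, length_alternatingWord,
      show 2 * k + 1 - k = k + 1 by omega, altWord_drop,
      show 2 * k + 1 - (k + 1) = k by omega]
  · rw [altWord_drop, show 2 * k + 1 - k = k + 1 by omega]

theorem altWord_take_even (i j : B) (m r : ℕ) :
    (alternatingWord i j (2 * m + r)).take r = alternatingWord i j r := by
  rw [← List.reverse_reverse (List.take r (alternatingWord i j (2 * m + r))), List.reverse_take,
    length_alternatingWord, show 2 * m + r - r = 2 * m by omega]
  by_cases h : Even r
  · have h1 : Even (2 * m + r) := by simpa [parity_simps] using h
    rw [altWord_reverse i j (2 * m + r), if_pos h1,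
      altWord_drop, show 2 * m + r - 2 * m = r by omega,
      altWord_reverse, if_pos h]
  · have h1 : ¬ Even (2 * m + r) := by simpa [parity_simps] using h
    rw [altWord_reverse i j (2 * m + r), if_neg h1,
      altWord_drop, show 2 * m + r - 2 * m = r by omega,
      altWord_reverse, if_neg h]

theorem prod_altWord_even_self (i j : B) : π (alternatingWord i j (2 * M i j)) = 1 := by
  rw [cs.prod_alternatingWord_eq_mul_pow, if_pos (by simp [parity_simps]),
    one_mul, show 2 * M i j / 2 = M i j by omega]
  exact cs.simple_mul_simple_pow i j

theorem prod_altWord_period (i j : B) (r : ℕ) :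
    π (alternatingWord i j (2 * M i j + r)) = π (alternatingWord i j r) := by
  conv_lhs => rw [← List.take_append_drop r (alternatingWord i j (2 * M i j + r))]
  rw [wordProd_append, altWord_take_even, altWord_drop,
    show 2 * M i j + r - r = 2 * M i j by omega, prod_altWord_even_self, mul_one]

theorem prod_altWord_tau (i j : B) (k : ℕ) :
    (π (alternatingWord i j k))⁻¹ * π (alternatingWord i j (k + 1)) =
      π (alternatingWord i j (2 * k + 1)) := by
  rw [altWord_split, wordProd_append, wordProd_reverse]

/-! ### The braid pairing -/

theorem ris_getD_eq (ω : List B) (l : ℕ) (h : l < ω.length) :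
    (ris ω).getD l 1 = (π (ω.drop (l + 1)))⁻¹ * π (ω.drop l) := by
  rw [cs.getD_rightInvSeq, ← List.getElem_cons_drop h, wordProd_cons]
  rw [List.getElem?_eq_getElem h]
  simp [mul_assoc]

theorem braid_ris_getD (i j : B) (l : ℕ) (h : l < 2 * M i j) :
    (ris (alternatingWord i j (2 * M i j))).getD l 1 =
      π (alternatingWord i j (2 * (2 * M i j - l - 1) + 1)) := by
  rw [cs.ris_getD_eq _ l (by simp [h]), altWord_drop, altWord_drop,
    show 2 * M i j - (l + 1) = 2 * M i j - l - 1 from rfl,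
    show 2 * M i j - l = (2 * M i j - l - 1) + 1 by omega]
  exact cs.prod_altWord_tau i j (2 * M i j - l - 1)

theorem braid_pairing (i j : B) (l : ℕ) (h : l < M i j) :
    (ris (alternatingWord i j (2 * M i j))).getD l 1 =
      (ris (alternatingWord i j (2 * M i j))).getD (l + M i j) 1 := by
  rw [cs.braid_ris_getD i j l (by omega), cs.braid_ris_getD i j (l + M i j) (by omega)]
  have e : 2 * (2 * M i j - l - 1) + 1 = 2 * M i j + (2 * (2 * M i j - (l + M i j) - 1) + 1) := by
    omega
  rw [e, cs.prod_altWord_period]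

theorem braid_count_even (i j : B) (t : W) :
    2 ∣ count t (ris (alternatingWord i j (2 * M i j))) := by
  set R := ris (alternatingWord i j (2 * M i j)) with hR
  have hlen : R.length = 2 * M i j := by
    rw [hR, cs.length_rightInvSeq, length_alternatingWord]
  have hsplit : R = R.take (M i j) ++ R.drop (M i j) := (List.take_append_drop _ R).symm
  have hdt : R.drop (M i j) = R.take (M i j) := by
    apply List.ext_getElem
    · rw [List.length_drop, List.length_take]
      omega
    · intro l h1 h2
      rw [List.getElem_drop, List.getElem_take]
      have hl : l < M i j := by
        rw [List.length_take] at h2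
        omega
      rw [← List.getD_eq_getElem R 1 (by omega), ← List.getD_eq_getElem R 1 (by omega)]
      have hpair := cs.braid_pairing i j l hl
      rw [← hR] at hpair
      rw [hpair, Nat.add_comm l (M i j)]
  have : count t R = 2 * count t (R.take (M i j)) := by
    conv_lhs => rw [hsplit]
    rw [List.count_append, hdt]
    omega
  omega

/-! ### The homomorphism and parity of inversion counts -/

theorem isLiftable_eta : M.IsLiftable cs.eta := by
  intro i j
  have halt : ∀ m : ℕ, cs.phiWord (alternatingWord i j (2 * m)) = (cs.eta i * cs.eta j) ^ m := by
    intro m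
    induction m with
    | zero => simp [alternatingWord]
    | succ m ih =>
      have h1 : 2 * (m + 1) = (2 * m + 1) + 1 := by omega
      have h2 : ¬ Even (2 * m + 1) := by simp [parity_simps]
      have h3 : Even (2 * m) := by simp [parity_simps]
      rw [h1, alternatingWord_succ', if_neg h2, alternatingWord_succ', if_pos h3,
        phiWord_cons, phiWord_cons, ih, pow_succ']
      rw [mul_assoc]
  apply Equiv.ext
  rintro ⟨t, e⟩
  rw [← halt (M i j), cs.phiWord_apply, cs.prod_altWord_even_self]
  have : (↑(count t (ris (alternatingWord i j (2 * M i j)))) : ZMod 2) = 0 :=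
    (ZMod.natCast_eq_zero_iff _ 2).mpr (cs.braid_count_even i j t)
  simp [this]

noncomputable def phiRepr : W →* Equiv.Perm (W × ZMod 2) := cs.lift ⟨cs.eta, cs.isLiftable_eta⟩

theorem phiRepr_wordProd (ω : List B) : cs.phiRepr (π ω) = cs.phiWord ω := by
  induction ω with
  | nil => simp [phiRepr]
  | cons i ω ih =>
    rw [wordProd_cons, map_mul, ih, phiWord_cons, phiRepr, cs.lift_apply_simple]

theorem count_ris_parity {ω ω' : List B} (h : π ω = π ω') (t : W) :
    ((count t (ris ω) : ZMod 2)) = ((count t (ris ω') : ZMod 2)) := by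
  have h1 : cs.phiWord ω (t, 0) = cs.phiWord ω' (t, 0) := by
    rw [← cs.phiRepr_wordProd, ← cs.phiRepr_wordProd, h]
  rw [cs.phiWord_apply, cs.phiWord_apply] at h1
  have := congrArg Prod.snd h1
  simpa using this

/-! ### Inversion sequences of appended words, ris vs lis -/

theorem ris_append (ω₁ ω₂ : List B) :
    ris (ω₁ ++ ω₂) = (ris ω₁).map (fun u => (π ω₂)⁻¹ * u * π ω₂) ++ ris ω₂ := by
  induction ω₁ with
  | nil => simp
  | cons a ω₁ ih =>
    have h1 : ris ((a :: ω₁) ++ ω₂) = (π (ω₁ ++ ω₂))⁻¹ * s a * π (ω₁ ++ ω₂) :: ris (ω₁ ++ ω₂) := rfl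
    have h2 : ris (a :: ω₁) = (π ω₁)⁻¹ * s a * π ω₁ :: ris ω₁ := rfl
    rw [h1, h2, ih, List.map_cons, wordProd_append]
    congr 1
    simp [mul_assoc]

theorem lis_eq_map_ris (ω : List B) :
    lis ω = (ris ω).map (fun u => π ω * u * (π ω)⁻¹) := by
  induction ω with
  | nil => simp
  | cons a ω ih =>
    have h1 : lis (a :: ω) = s a :: List.map (⇑(MulAut.conj (s a))) (lis ω) := rfl
    have h2 : ris (a :: ω) = (π ω)⁻¹ * s a * π ω :: ris ω := rfl
    rw [h1, h2, ih, List.map_cons, List.map_map]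
    congr 1
    · rw [wordProd_cons]
      group
    · apply List.map_congr_left
      intro u _
      simp only [Function.comp_apply, MulAut.conj_apply, wordProd_cons]
      group

/-! ### Parity of the count of t in a word for a reflection -/

theorem conj_mul_inj (g : W) : Function.Injective (fun u : W => g⁻¹ * u * g) := by
  intro x y hxy
  simpa [mul_assoc] using congrArg (fun z => g * z * g⁻¹) hxy

theorem count_ris_reflWord (α : List B) (i : B) :
    count (π α * s i * (π α)⁻¹) (ris (α ++ i :: α.reverse)) % 2 = 1 := by
  set q := π α with hq
  set t := q * s i * q⁻¹ with ht
  have h1 : ris (α ++ i :: α.reverse) =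
      (ris α).map (fun u => (π (i :: α.reverse))⁻¹ * u * π (i :: α.reverse)) ++
        ris (i :: α.reverse) := cs.ris_append α (i :: α.reverse)
  have h2 : ris (i :: α.reverse) = (π α.reverse)⁻¹ * s i * π α.reverse :: ris α.reverse := rfl
  have h3 : (π α.reverse)⁻¹ * s i * π α.reverse = t := by
    rw [wordProd_reverse, ht, hq]
    group
  have h4 : ris α.reverse = ((ris α).map (fun u => q * u * q⁻¹)).reverse := by
    rw [cs.rightInvSeq_reverse, cs.lis_eq_map_ris, hq]
  have hc1 : count t ((ris α).map (fun u => (π (i :: α.reverse))⁻¹ * u * π (i :: α.reverse)))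
      = count (s i) (ris α) := by
    have hfix : (fun u => (π (i :: α.reverse))⁻¹ * u * π (i :: α.reverse)) (s i) = t := by
      simp only [wordProd_cons, wordProd_reverse, ht, hq, mul_inv_rev, cs.inv_simple, inv_inv]
      group
      simp [mul_assoc, cs.simple_mul_simple_cancel_left]
    rw [← hfix]
    exact List.count_map_of_injective _ _ (conj_mul_inj _) _
  have hc2 : count t (((ris α).map (fun u => q * u * q⁻¹)).reverse) = count (s i) (ris α) := by
    rw [List.count_reverse]
    have hfix : (fun u => q * u * q⁻¹) (s i) = t := by rw [ht]
    rw [← hfix]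
    have : Function.Injective (fun u : W => q * u * q⁻¹) := by
      intro x y hxy
      simpa [mul_assoc] using congrArg (fun z => q⁻¹ * z * q) hxy
    exact List.count_map_of_injective _ _ this _
  rw [h1, List.count_append, h2, h3, List.count_cons, if_pos (by simp), h4, hc1, hc2]
  omega

/-! ### The strong exchange property -/

theorem mem_ris_of_inversion {w t : W} (ht : cs.IsReflection t) (hlt : ℓ (w * t) < ℓ w)
    {ω : List B} (hω : π ω = w) : t ∈ ris ω := by
  have htt : t * t = 1 := ht.mul_self
  obtain ⟨q', i, htqi⟩ := id ht
  obtain ⟨α, hα⟩ := cs.wordProd_surjective q'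
  obtain ⟨ω', hred', hω'⟩ := cs.exists_reduced_word' (w * t)
  have hπt : π (α ++ i :: α.reverse) = t := by
    rw [wordProd_append, wordProd_cons, wordProd_reverse, hα, htqi]
    group
  have hπ : π (ω' ++ (α ++ i :: α.reverse)) = π ω := by
    rw [wordProd_append, hπt, ← hω', hω, mul_assoc, htt, mul_one]
  have hpar := cs.count_ris_parity hπ t
  have hcnt' : count t (ris ω') = 0 := by
    rw [List.count_eq_zero]
    intro hmem
    have hinv := cs.isRightInversion_of_mem_rightInvSeq hred' hmem
    rw [← hω'] at hinv
    have h2 := hinv.2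
    rw [mul_assoc, htt, mul_one] at h2
    omega
  have hsplit : count t (ris (ω' ++ (α ++ i :: α.reverse))) =
      count t ((ris ω').map (fun u => (π (α ++ i :: α.reverse))⁻¹ * u * π (α ++ i :: α.reverse)))
        + count t (ris (α ++ i :: α.reverse)) := by
    rw [cs.ris_append, List.count_append]
  have hmap0 : count t ((ris ω').map
      (fun u => (π (α ++ i :: α.reverse))⁻¹ * u * π (α ++ i :: α.reverse))) = 0 := by
    have h5 := List.count_map_of_injective (ris ω') _
      (conj_mul_inj (π (α ++ i :: α.reverse))) t
    have hfix : (π (α ++ i :: α.reverse))⁻¹ * t * π (α ++ i :: α.reverse) = t := by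
      rw [hπt, inv_mul_cancel, one_mul]
    rw [hfix] at h5
    rw [h5, hcnt']
  have hrefl : count (π α * s i * (π α)⁻¹) (ris (α ++ i :: α.reverse)) % 2 = 1 :=
    cs.count_ris_reflWord α i
  rw [hα, ← htqi] at hrefl
  by_contra hnmem
  have hcnt : count t (ris ω) = 0 := List.count_eq_zero.mpr hnmem
  rw [hcnt, hsplit, hmap0, zero_add] at hpar
  have h7 : (count t (ris (α ++ i :: α.reverse)) : ZMod 2) = 0 := by
    rw [hpar]
    norm_num
  have h6 : (2:ℕ) ∣ count t (ris (α ++ i :: α.reverse)) :=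
    (ZMod.natCast_eq_zero_iff _ 2).mp h7
  omega

theorem exchange_right {w t : W} (ht : cs.IsReflection t) (hlt : ℓ (w * t) < ℓ w)
    {ω : List B} (hω : π ω = w) : ∃ k < ω.length, w * t = π (ω.eraseIdx k) := by
  have hmem := cs.mem_ris_of_inversion ht hlt hω
  obtain ⟨k, hk, hget⟩ := List.mem_iff_getElem.mp hmem
  have hk' : k < ω.length := by
    rw [cs.length_rightInvSeq] at hk
    exact hk
  refine ⟨k, hk', ?_⟩
  rw [← hω, ← hget, ← List.getD_eq_getElem _ 1 hk]
  exact cs.wordProd_mul_getD_rightInvSeq ω k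

theorem exchange_left {w t : W} (ht : cs.IsReflection t) (hlt : ℓ (t * w) < ℓ w)
    {ω : List B} (hω : π ω = w) : ∃ k < ω.length, t * w = π (ω.eraseIdx k) := by
  have h1 : ℓ ((w⁻¹) * t) < ℓ (w⁻¹) := by
    have e : w⁻¹ * t = (t * w)⁻¹ := by rw [mul_inv_rev, ht.inv]
    rw [e, cs.length_inv, cs.length_inv]
    exact hlt
  have hmem : t ∈ ris (ω.reverse) := cs.mem_ris_of_inversion ht h1 (by rw [wordProd_reverse, hω])
  rw [cs.rightInvSeq_reverse, List.mem_reverse] at hmem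
  obtain ⟨k, hk, hget⟩ := List.mem_iff_getElem.mp hmem
  have hk' : k < ω.length := by
    rw [cs.length_leftInvSeq] at hk
    exact hk
  refine ⟨k, hk', ?_⟩
  rw [← hω, ← hget, ← List.getD_eq_getElem _ 1 hk]
  exact cs.getD_leftInvSeq_mul_wordProd ω k


/-! ### Words in a set of simple reflections -/

theorem sword_mem_closure {K : Set W} {ω : List B} (h : ∀ i ∈ ω, s i ∈ K) :
    π ω ∈ Subgroup.closure K := by
  induction ω with
  | nil => simpa using Subgroup.one_mem _
  | cons a ω ih =>
    rw [wordProd_cons]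
    exact mul_mem (Subgroup.subset_closure (h a (by simp)))
      (ih (fun i hi => h i (by simp [hi])))

theorem exists_sword {K : Set W} (hK : K ⊆ Set.range cs.simple) {u : W}
    (hu : u ∈ Subgroup.closure K) :
    ∃ ω : List B, (∀ i ∈ ω, s i ∈ K) ∧ π ω = u := by
  induction hu using Subgroup.closure_induction with
  | mem x hx =>
    obtain ⟨i, hi⟩ := hK hx
    exact ⟨[i], by simpa [hi] using hx, by simpa using hi⟩
  | one => exact ⟨[], by simp, by simp⟩
  | mul x y _ _ hx hy =>
    obtain ⟨ω₁, h₁, hπ₁⟩ := hx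
    obtain ⟨ω₂, h₂, hπ₂⟩ := hy
    refine ⟨ω₁ ++ ω₂, ?_, by rw [wordProd_append, hπ₁, hπ₂]⟩
    intro i hi
    rcases List.mem_append.mp hi with h | h
    · exact h₁ i h
    · exact h₂ i h
  | inv x _ hx =>
    obtain ⟨ω₁, h₁, hπ₁⟩ := hx
    exact ⟨ω₁.reverse, fun i hi => h₁ i (List.mem_reverse.mp hi),
      by rw [wordProd_reverse, hπ₁]⟩

theorem exists_descent_position {ω : List B} (h : ¬ cs.IsReduced ω) :
    ∃ j < ω.length, ℓ (π (ω.take (j + 1))) < ℓ (π (ω.take j)) := by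
  by_contra hc
  push_neg at hc
  apply h
  have key : ∀ j ≤ ω.length, ℓ (π (ω.take j)) = j := by
    intro j
    induction j with
    | zero => simp
    | succ j ihj =>
      intro hj
      have h1 := ihj (by omega)
      have h2 : ω.take (j + 1) = ω.take j ++ [ω[j]'(by omega)] := by
        rw [List.take_succ, List.getElem?_eq_getElem (by omega)]
        rfl
      have h4 := hc j (by omega)
      have h5 := cs.length_mul_simple (π (ω.take j)) (ω[j]'(by omega))
      rw [h2, wordProd_append, wordProd_singleton] at h4 ⊢
      omega
  have := key ω.length le_rfl
  rwa [List.take_length] at this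

theorem exists_reduced_sword {K : Set W} (hK : K ⊆ Set.range cs.simple) {u : W}
    (hu : u ∈ Subgroup.closure K) :
    ∃ ω : List B, (∀ i ∈ ω, s i ∈ K) ∧ π ω = u ∧ cs.IsReduced ω := by
  obtain ⟨ω, hω, hπ⟩ := cs.exists_sword hK hu
  clear hu
  suffices H : ∀ n (ω : List B), ω.length ≤ n → (∀ i ∈ ω, s i ∈ K) →
      ∃ ω' : List B, (∀ i ∈ ω', s i ∈ K) ∧ π ω' = π ω ∧ cs.IsReduced ω' by
    obtain ⟨ω', h1, h2, h3⟩ := H ω.length ω le_rfl hω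
    exact ⟨ω', h1, by rw [h2, hπ], h3⟩
  intro n
  induction n with
  | zero =>
    intro ω hlen _
    have : ω = [] := List.length_eq_zero_iff.mp (by omega)
    subst this
    exact ⟨[], by simp, rfl, by simp [IsReduced]⟩
  | succ n ih =>
    intro ω hlen hKω
    by_cases hred : cs.IsReduced ω
    · exact ⟨ω, hKω, rfl, hred⟩
    · obtain ⟨j, hj, hdesc⟩ := cs.exists_descent_position hred
      have htake : ω.take (j + 1) = ω.take j ++ [ω[j]] := by
        rw [List.take_succ, List.getElem?_eq_getElem hj]
        rfl
      rw [htake, wordProd_append, wordProd_singleton] at hdesc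
      obtain ⟨k, hk, hdel⟩ := cs.exchange_right (cs.isReflection_simple ω[j]) hdesc
        (rfl : π (ω.take j) = π (ω.take j))
      set ω' := (ω.take j).eraseIdx k ++ ω.drop (j + 1) with hω'
      have hπ' : π ω' = π ω := by
        rw [hω', wordProd_append, ← hdel]
        conv_rhs => rw [← List.take_append_drop (j + 1) ω]
        rw [wordProd_append, htake, wordProd_append, wordProd_singleton]
      have hlen' : ω'.length ≤ n := by
        rw [hω', List.length_append, List.length_eraseIdx_of_lt hk, List.length_take,
          List.length_drop]
        rw [List.length_take] at hk
        omega
      have hKω' : ∀ i ∈ ω', s i ∈ K := by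
        intro i hi
        rcases List.mem_append.mp hi with h | h
        · exact hKω i (List.take_subset j ω (List.mem_of_mem_eraseIdx h))
        · exact hKω i (List.drop_subset (j + 1) ω h)
      obtain ⟨ω'', h1, h2, h3⟩ := ih ω' hlen' hKω'
      exact ⟨ω'', h1, by rw [h2, hπ'], h3⟩

theorem exists_simple_descent {K : Set W} (hK : K ⊆ Set.range cs.simple) {u : W}
    (hu : u ∈ Subgroup.closure K) (hne : u ≠ 1) :
    ∃ (i : B) (u₁ : W), s i ∈ K ∧ u₁ ∈ Subgroup.closure K ∧ u = s i * u₁ ∧ ℓ u = ℓ u₁ + 1 := by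
  obtain ⟨ω, hKω, hπ, hred⟩ := cs.exists_reduced_sword hK hu
  cases ω with
  | nil => exact absurd (by rw [← hπ]; simp) hne
  | cons i ω' =>
    refine ⟨i, π ω', hKω i (by simp), cs.sword_mem_closure (fun a ha => hKω a (by simp [ha])), ?_, ?_⟩
    · rw [← hπ, wordProd_cons]
    · have h1 : ℓ u = ω'.length + 1 := by
        rw [← hπ]
        rw [IsReduced] at hred
        rw [hred]
        simp
      have h2 : ℓ (π ω') ≤ ω'.length := cs.length_wordProd_le ω'
      have h3 : ℓ u ≤ ℓ (π ω') + 1 := by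
        rw [← hπ, wordProd_cons]
        have := cs.length_simple_mul (π ω') i
        omega
      omega

theorem mem_of_mem_closure_length_one {K : Set W} (hK : K ⊆ Set.range cs.simple) {u : W}
    (hu : u ∈ Subgroup.closure K) (hl : ℓ u = 1) : u ∈ K := by
  obtain ⟨ω, hKω, hπ, hred⟩ := cs.exists_reduced_sword hK hu
  rw [IsReduced, hπ, hl] at hred
  obtain ⟨i, rfl⟩ : ∃ i, ω = [i] := by
    cases ω with
    | nil => simp at hred
    | cons a l =>
      cases l with
      | nil => exact ⟨a, rfl⟩
      | cons b l' => simp at hred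
  rw [← hπ, wordProd_singleton]
  exact hKω i (by simp)

/-! ### Length additivity on cosets -/

theorem length_mul_of_min_left {K : Set W} (hK : K ⊆ Set.range cs.simple) {x : W}
    (hmin : ∀ u ∈ Subgroup.closure K, ℓ x ≤ ℓ (u * x)) :
    ∀ u ∈ Subgroup.closure K, ℓ (u * x) = ℓ u + ℓ x := by
  suffices H : ∀ n, ∀ u ∈ Subgroup.closure K, ℓ u = n → ℓ (u * x) = ℓ u + ℓ x by
    intro u hu
    exact H (ℓ u) u hu rfl
  intro n
  induction n using Nat.strong_induction_on with
  | _ n ih =>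
    intro u hu hn
    rcases eq_or_ne u 1 with rfl | hne
    · simp
    · obtain ⟨i, u₁, hiK, hu₁, hdecomp, hlen⟩ := cs.exists_simple_descent hK hu hne
      have ih1 : ℓ (u₁ * x) = ℓ u₁ + ℓ x := ih (ℓ u₁) (by omega) u₁ hu₁ rfl
      have hgoal : ℓ (s i * (u₁ * x)) = ℓ (u₁ * x) + 1 := by
        rcases cs.length_simple_mul (u₁ * x) i with h | h
        · exact h
        · exfalso
          obtain ⟨ρ₁, hρ₁red, hρ₁⟩ := cs.exists_reduced_word' u₁
          obtain ⟨ρₓ, hρₓred, hρₓ⟩ := cs.exists_reduced_word' x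
          have hword : π (ρ₁ ++ ρₓ) = u₁ * x := by rw [wordProd_append, ← hρ₁, ← hρₓ]
          obtain ⟨k, hk, hdel⟩ := cs.exchange_left (cs.isReflection_simple i) (by omega) hword
          have hρ₁len : ℓ u₁ = ρ₁.length := by rw [hρ₁]; exact hρ₁red
          have hρₓlen : ℓ x = ρₓ.length := by rw [hρₓ]; exact hρₓred
          rw [List.length_append] at hk
          rcases lt_or_ge k ρ₁.length with hkl | hkl
          · rw [List.eraseIdx_append_of_lt_length hkl, wordProd_append, ← hρₓ] at hdel
            have hcancel : s i * u₁ = π (ρ₁.eraseIdx k) := by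
              have h6 : s i * u₁ * x = π (ρ₁.eraseIdx k) * x := by
                rw [mul_assoc, hdel]
              exact mul_right_cancel h6
            have hlb : ℓ (s i * u₁) ≤ ρ₁.length - 1 := by
              rw [hcancel]
              have h7 := cs.length_wordProd_le (ρ₁.eraseIdx k)
              rw [List.length_eraseIdx_of_lt hkl] at h7
              exact h7
            have h8 : ℓ (s i * u₁) = ℓ u₁ + 1 := by rw [← hdecomp]; omega
            omega
          · rw [List.eraseIdx_append_of_length_le hkl, wordProd_append, ← hρ₁] at hdel
            have hx' : (u₁⁻¹ * (s i) * u₁) * x = π (ρₓ.eraseIdx (k - ρ₁.length)) := by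
              have h6 := congrArg (fun z => u₁⁻¹ * z) hdel
              simpa [mul_assoc] using h6
            have hmem' : u₁⁻¹ * (s i) * u₁ ∈ Subgroup.closure K :=
              mul_mem (mul_mem (inv_mem hu₁) (Subgroup.subset_closure hiK)) hu₁
            have h7 := hmin _ hmem'
            rw [hx'] at h7
            have h8 := cs.length_wordProd_le (ρₓ.eraseIdx (k - ρ₁.length))
            have h9 : (ρₓ.eraseIdx (k - ρ₁.length)).length = ρₓ.length - 1 :=
              List.length_eraseIdx_of_lt (by omega)
            omega
      have h9 : ℓ (s i * u₁) = ℓ u₁ + 1 := by rw [← hdecomp]; omega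
      rw [hdecomp, mul_assoc, hgoal, ih1]
      omega

theorem length_mul_of_min_right {K : Set W} (hK : K ⊆ Set.range cs.simple) {x : W}
    (hmin : ∀ v ∈ Subgroup.closure K, ℓ x ≤ ℓ (x * v)) :
    ∀ v ∈ Subgroup.closure K, ℓ (x * v) = ℓ x + ℓ v := by
  have h1 : ∀ u ∈ Subgroup.closure K, ℓ x⁻¹ ≤ ℓ (u * x⁻¹) := by
    intro u hu
    have e : u * x⁻¹ = (x * u⁻¹)⁻¹ := by group
    rw [e, cs.length_inv, cs.length_inv]
    exact hmin u⁻¹ (inv_mem hu)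
  intro v hv
  have h2 := cs.length_mul_of_min_left hK h1 v⁻¹ (inv_mem hv)
  have e : v⁻¹ * x⁻¹ = (x * v)⁻¹ := by group
  rw [e, cs.length_inv, cs.length_inv, cs.length_inv] at h2
  omega

theorem exists_min_left_coset (K : Set W) (x : W) :
    ∃ u₀ ∈ Subgroup.closure K, ∀ u ∈ Subgroup.closure K, ℓ (u₀ * x) ≤ ℓ (u * x) := by
  have hP : ∃ n, ∃ u ∈ Subgroup.closure K, ℓ (u * x) = n := ⟨ℓ x, 1, Subgroup.one_mem _, by simp⟩
  obtain ⟨u₀, hu₀, hl⟩ := Nat.find_spec hP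
  refine ⟨u₀, hu₀, fun u hu => ?_⟩
  rw [hl]
  exact Nat.find_min' hP ⟨u, hu, rfl⟩

theorem length_mul_of_no_descent_left {K : Set W} (hK : K ⊆ Set.range cs.simple) {x : W}
    (hnd : ∀ i : B, s i ∈ K → ℓ x ≤ ℓ (s i * x)) :
    ∀ u ∈ Subgroup.closure K, ℓ (u * x) = ℓ u + ℓ x := by
  obtain ⟨u₀, hu₀, hmin₀⟩ := cs.exists_min_left_coset K x
  set d := u₀ * x with hd
  have hmind : ∀ u ∈ Subgroup.closure K, ℓ d ≤ ℓ (u * d) := by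
    intro u hu
    have e : u * d = (u * u₀) * x := by rw [hd, mul_assoc]
    rw [e]
    exact hmin₀ _ (mul_mem hu hu₀)
  have hadd := cs.length_mul_of_min_left hK hmind
  have hx : x = u₀⁻¹ * d := by rw [hd]; group
  have hkey : u₀⁻¹ = 1 := by
    by_contra hne
    obtain ⟨i, u₁, hiK, hu₁, hdecomp, hlen⟩ := cs.exists_simple_descent hK (inv_mem hu₀) hne
    have h2 : s i * x = u₁ * d := by
      rw [hx, hdecomp, mul_assoc, ← mul_assoc (s i) (s i), cs.simple_mul_simple_self, one_mul]
    have h3 : ℓ (s i * x) = ℓ u₁ + ℓ d := by rw [h2, hadd u₁ hu₁]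
    have h4 : ℓ x = (ℓ u₁ + 1) + ℓ d := by
      rw [hx, hadd u₀⁻¹ (inv_mem hu₀), ← hlen, hdecomp]
    have h5 := hnd i hiK
    omega
  have hx2 : x = d := by rw [hx, hkey, one_mul]
  intro u hu
  rw [hx2]
  exact hadd u hu

theorem length_mul_of_no_descent_right {K : Set W} (hK : K ⊆ Set.range cs.simple) {x : W}
    (hnd : ∀ i : B, s i ∈ K → ℓ x ≤ ℓ (x * s i)) :
    ∀ v ∈ Subgroup.closure K, ℓ (x * v) = ℓ x + ℓ v := by
  have h1 : ∀ i : B, s i ∈ K → ℓ x⁻¹ ≤ ℓ (s i * x⁻¹) := by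
    intro i hi
    have e : s i * x⁻¹ = (x * s i)⁻¹ := by rw [mul_inv_rev, cs.inv_simple]
    rw [e, cs.length_inv, cs.length_inv]
    exact hnd i hi
  intro v hv
  have h2 := cs.length_mul_of_no_descent_left hK h1 v⁻¹ (inv_mem hv)
  have e : v⁻¹ * x⁻¹ = (x * v)⁻¹ := by group
  rw [e, cs.length_inv, cs.length_inv, cs.length_inv] at h2
  omega

/-! ### Deodhar's lemma -/

theorem deodhar {K : Set W} (hK : K ⊆ Set.range cs.simple) {d : W}
    (hadd : ∀ v ∈ Subgroup.closure K, ℓ (d * v) = ℓ d + ℓ v) (i : B) :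
    (∀ v ∈ Subgroup.closure K, ℓ (s i * d * v) = ℓ (s i * d) + ℓ v) ∨
      ∃ j : B, s j ∈ K ∧ s i * d = d * s j := by
  have hbound : ∀ v ∈ Subgroup.closure K, ℓ (d * v) - 1 ≤ ℓ (s i * d * v) := by
    intro v hv
    have h1 := cs.length_simple_mul (d * v) i
    rw [← mul_assoc] at h1
    omega
  rcases cs.length_simple_mul d i with hinc | hdec
  · -- ℓ (s i * d) = ℓ d + 1
    by_cases hmin2 : ∀ v ∈ Subgroup.closure K, ℓ (s i * d) ≤ ℓ (s i * d * v)
    · exact Or.inl (cs.length_mul_of_min_right hK hmin2)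
    · push_neg at hmin2
      obtain ⟨v, hv, hlt⟩ := hmin2
      have h2 := hbound v hv
      have h3 := hadd v hv
      have hvne : v ≠ 1 := by
        intro hveq
        rw [hveq, mul_one] at hlt
        omega
      have hv1 : ℓ v = 1 := by
        have : ℓ v ≠ 0 := fun hc => hvne (cs.length_eq_zero_iff.mp hc)
        omega
      have hvK : v ∈ K := cs.mem_of_mem_closure_length_one hK hv hv1
      obtain ⟨j, hj⟩ := hK hvK
      subst hj
      have hdsj : ℓ (d * s j) = ℓ d + 1 := by omega
      have hlsds : ℓ (s i * (d * s j)) < ℓ (d * s j) := by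
        rw [← mul_assoc]
        omega
      obtain ⟨ρd, hρdred, hρd⟩ := cs.exists_reduced_word' d
      have hword : π (ρd ++ [j]) = d * s j := by
        rw [wordProd_append, wordProd_singleton, ← hρd]
      obtain ⟨k, hk, hdel⟩ := cs.exchange_left (cs.isReflection_simple i) hlsds hword
      have hρdlen : ℓ d = ρd.length := by rw [hρd]; exact hρdred
      rw [List.length_append] at hk
      rcases lt_or_ge k ρd.length with hkl | hkl
      · exfalso
        rw [List.eraseIdx_append_of_lt_length hkl, wordProd_append, wordProd_singleton] at hdel
        have hcancel : s i * d = π (ρd.eraseIdx k) := by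
          have h6 : s i * d * s j = π (ρd.eraseIdx k) * s j := by rw [mul_assoc, hdel]
          exact mul_right_cancel h6
        have h7 := cs.length_wordProd_le (ρd.eraseIdx k)
        rw [List.length_eraseIdx_of_lt hkl] at h7
        rw [← hcancel] at h7
        omega
      · have hkeq : k = ρd.length := by simp at hk; omega
        subst hkeq
        rw [List.eraseIdx_append_of_length_le hkl, Nat.sub_self, List.eraseIdx_cons_zero,
          List.append_nil, ← hρd] at hdel
        refine Or.inr ⟨j, hvK, ?_⟩
        have e1 : s i * d = s i * (d * s j) * s j := by
          rw [mul_assoc (s i), mul_assoc d, cs.simple_mul_simple_self, mul_one]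
        rw [e1, hdel]
  · -- ℓ (s i * d) + 1 = ℓ d : s i * d is still minimal
    left
    apply cs.length_mul_of_min_right hK
    intro v hv
    have h2 := hbound v hv
    have h3 := hadd v hv
    omega

/-! ### Double coset normal form (Geck-Pfeiffer 2.1.9) -/

theorem double_coset_rep {K K' : Set W} (hK : K ⊆ Set.range cs.simple)
    (hK' : K' ⊆ Set.range cs.simple) {d : W}
    (hndl : ∀ i : B, s i ∈ K → ℓ d ≤ ℓ (s i * d))
    (hndr : ∀ i : B, s i ∈ K' → ℓ d ≤ ℓ (d * s i)) :
    ∀ a ∈ Subgroup.closure K, ∀ b ∈ Subgroup.closure K',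
      ∃ u ∈ Subgroup.closure K, ∃ v ∈ Subgroup.closure K',
        a * d * b = u * d * v ∧ ℓ (a * d * b) = ℓ u + ℓ d + ℓ v := by
  have hladd : ∀ u ∈ Subgroup.closure K, ℓ (u * d) = ℓ u + ℓ d :=
    cs.length_mul_of_no_descent_left hK hndl
  have hradd0 : ∀ v ∈ Subgroup.closure K', ℓ (d * v) = ℓ d + ℓ v :=
    cs.length_mul_of_no_descent_right hK' hndr
  have claim : ∀ n, ∀ a ∈ Subgroup.closure K, ℓ a = n →
      ∃ u ∈ Subgroup.closure K, (∃ c ∈ Subgroup.closure K', a * d = u * d * c) ∧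
        (∀ v ∈ Subgroup.closure K', ℓ (u * d * v) = ℓ (u * d) + ℓ v) := by
    intro n
    induction n using Nat.strong_induction_on with
    | _ n ih =>
      intro a ha hn
      rcases eq_or_ne a 1 with rfl | hne
      · refine ⟨1, Subgroup.one_mem _, ⟨1, Subgroup.one_mem _, by simp⟩, ?_⟩
        intro v hv
        simp only [one_mul]
        exact hradd0 v hv
      · obtain ⟨i, a₁, hiK, ha₁, hdecomp, hlen⟩ := cs.exists_simple_descent hK ha hne
        obtain ⟨u₁, hu₁, ⟨c₁, hc₁, hrep₁⟩, hadd₁⟩ := ih (ℓ a₁) (by omega) a₁ ha₁ rfl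
        have hadd₁' : ∀ v ∈ Subgroup.closure K', ℓ (u₁ * d * v) = ℓ (u₁ * d) + ℓ v := hadd₁
        rcases cs.deodhar hK' (by
            intro v hv
            have := hadd₁ v hv
            rw [mul_assoc] at this ⊢
            exact this) i with hcase | ⟨j, hjK', hswap⟩
        · refine ⟨s i * u₁, mul_mem (Subgroup.subset_closure hiK) hu₁, ⟨c₁, hc₁, ?_⟩, ?_⟩
          · rw [hdecomp, mul_assoc, hrep₁]
            group
          · intro v hv
            have h1 := hcase v hv
            rw [show s i * (u₁ * d) * v = s i * u₁ * d * v by group,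
              show s i * (u₁ * d) = s i * u₁ * d by group] at h1
            exact h1
        · refine ⟨u₁, hu₁, ⟨s j * c₁, mul_mem (Subgroup.subset_closure hjK') hc₁, ?_⟩, hadd₁⟩
          rw [hdecomp, mul_assoc, hrep₁,
            show s i * (u₁ * d * c₁) = (s i * (u₁ * d)) * c₁ by group, hswap]
          group
  intro a ha b hb
  obtain ⟨u, hu, ⟨c, hc, hrep⟩, haddu⟩ := claim (ℓ a) a ha rfl
  have hrw : a * d * b = u * d * (c * b) := by
    rw [mul_assoc a d b, show a * (d * b) = (a * d) * b by group, hrep]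
    group
  refine ⟨u, hu, c * b, mul_mem hc hb, hrw, ?_⟩
  rw [hrw, haddu (c * b) (mul_mem hc hb), hladd u hu]

/-- Strict minimality in the double coset. -/
theorem double_coset_strict_min {K K' : Set W} (hK : K ⊆ Set.range cs.simple)
    (hK' : K' ⊆ Set.range cs.simple) {d : W}
    (hndl : ∀ i : B, s i ∈ K → ℓ d ≤ ℓ (s i * d))
    (hndr : ∀ i : B, s i ∈ K' → ℓ d ≤ ℓ (d * s i)) :
    ∀ a ∈ Subgroup.closure K, ∀ b ∈ Subgroup.closure K',
      a * d * b ≠ d → ℓ d < ℓ (a * d * b) := by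
  intro a ha b hb hne
  obtain ⟨u, hu, v, hv, hrep, hlen⟩ := cs.double_coset_rep hK hK' hndl hndr a ha b hb
  rcases Nat.eq_zero_or_pos (ℓ u) with hu0 | hu0
  · rcases Nat.eq_zero_or_pos (ℓ v) with hv0 | hv0
    · exfalso
      apply hne
      rw [hrep, cs.length_eq_zero_iff.mp hu0, cs.length_eq_zero_iff.mp hv0]
      group
    · omega
  · omega

/-! ### Kilmoyer's theorem -/

theorem kilmoyer {K K' : Set W} (hK : K ⊆ Set.range cs.simple)
    (hK' : K' ⊆ Set.range cs.simple) {d : W}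
    (hndl : ∀ i : B, s i ∈ K → ℓ d ≤ ℓ (s i * d))
    (hndr : ∀ i : B, s i ∈ K' → ℓ d ≤ ℓ (d * s i)) :
    ∀ x ∈ Subgroup.closure K, ∀ y ∈ Subgroup.closure K', x * d = d * y →
      x ∈ Subgroup.closure {z | z ∈ K ∧ ∃ z' ∈ K', z * d = d * z'} := by
  have hladd : ∀ u ∈ Subgroup.closure K, ℓ (u * d) = ℓ u + ℓ d :=
    cs.length_mul_of_no_descent_left hK hndl
  have hradd : ∀ v ∈ Subgroup.closure K', ℓ (d * v) = ℓ d + ℓ v :=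
    cs.length_mul_of_no_descent_right hK' hndr
  suffices H : ∀ n, ∀ x ∈ Subgroup.closure K, ℓ x = n → ∀ y ∈ Subgroup.closure K', x * d = d * y →
      x ∈ Subgroup.closure {z | z ∈ K ∧ ∃ z' ∈ K', z * d = d * z'} by
    intro x hx y hy heq
    exact H (ℓ x) x hx rfl y hy heq
  intro n
  induction n using Nat.strong_induction_on with
  | _ n ih =>
    intro x hx hn y hy heq
    rcases eq_or_ne x 1 with rfl | hne
    · exact Subgroup.one_mem _
    · obtain ⟨i, x₁, hiK, hx₁, hdecomp, hlen⟩ := cs.exists_simple_descent hK hx hne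
      have hly : ℓ y = ℓ x := by
        have h1 := hladd x hx
        have h2 := hradd y hy
        rw [heq] at h1
        omega
      have hx1ne : ℓ x ≠ 0 := fun hc => hne (cs.length_eq_zero_iff.mp hc)
      obtain ⟨ρd, hρdred, hρd⟩ := cs.exists_reduced_word' d
      obtain ⟨ρy, hρyK', hρy, hρyred⟩ := cs.exists_reduced_sword hK' hy
      have hword : π (ρd ++ ρy) = d * y := by rw [wordProd_append, ← hρd, hρy]
      have hρdlen : ℓ d = ρd.length := by rw [hρd]; exact hρdred
      have hρylen : ℓ y = ρy.length := by rw [← hρy]; exact hρyred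
      have hdesc : ℓ (s i * (d * y)) < ℓ (d * y) := by
        have e1 : s i * (d * y) = x₁ * d := by
          rw [← heq, hdecomp, ← mul_assoc, ← mul_assoc, cs.simple_mul_simple_self, one_mul]
        rw [e1, hladd x₁ hx₁, ← heq, hladd x hx]
        omega
      obtain ⟨k, hk, hdel⟩ := cs.exchange_left (cs.isReflection_simple i) hdesc hword
      rw [List.length_append] at hk
      rcases lt_or_ge k ρd.length with hkl | hkl
      · exfalso
        rw [List.eraseIdx_append_of_lt_length hkl, wordProd_append, hρy] at hdel
        have hcancel : s i * d = π (ρd.eraseIdx k) := by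
          have h6 : s i * d * y = π (ρd.eraseIdx k) * y := by rw [mul_assoc, hdel]
          exact mul_right_cancel h6
        have h7 := cs.length_wordProd_le (ρd.eraseIdx k)
        rw [List.length_eraseIdx_of_lt hkl, ← hcancel] at h7
        have h8 := hndl i hiK
        have h9 := cs.length_simple_mul_ne d i
        omega
      · rw [List.eraseIdx_append_of_length_le hkl, wordProd_append, ← hρd] at hdel
        set ytil := π (ρy.eraseIdx (k - ρd.length)) with hytil
        have hytilmem : ytil ∈ Subgroup.closure K' :=
          cs.sword_mem_closure (fun a hha => hρyK' a (List.mem_of_mem_eraseIdx hha))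
        set y2 := ytil * y⁻¹ with hy2
        have hy2mem : y2 ∈ Subgroup.closure K' := mul_mem hytilmem (inv_mem hy)
        have hsid : s i * d = d * y2 := by
          rw [hy2, hytil]
          have h6 : s i * (d * y) * y⁻¹ = d * (π (ρy.eraseIdx (k - ρd.length)) * y⁻¹) := by
            rw [hdel, hytil]; group
          rw [← h6]; group
        have hy2K' : y2 ∈ K' := by
          apply cs.mem_of_mem_closure_length_one hK' hy2mem
          have h1 := hradd y2 hy2mem
          rw [← hsid] at h1
          have h8 := hndl i hiK
          rcases cs.length_simple_mul d i with h10 | h10 <;> omega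
        have hsiL : s i ∈ {z | z ∈ K ∧ ∃ z' ∈ K', z * d = d * z'} := ⟨hiK, y2, hy2K', hsid⟩
        have hx₁eq : x₁ * d = d * (y2 * y) := by
          have e1 : x₁ = s i * x := by
            rw [hdecomp, ← mul_assoc, cs.simple_mul_simple_self, one_mul]
          rw [e1, mul_assoc, heq, ← mul_assoc, hsid]
          group
        have hx₁L := ih (ℓ x₁) (by omega) x₁ hx₁ rfl (y2 * y) (mul_mem (Subgroup.subset_closure hy2K') hy) hx₁eq
        rw [hdecomp]
        exact mul_mem (Subgroup.subset_closure hsiL) hx₁L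


end CoxeterSystem


/-- A Bédard-admissible sequence `t n = (J_n, w_n)` (as in 4.1, 4.2 of the paper). -/
def BedardAdmissible {B W : Type*} [Group W] {M : CoxeterMatrix B}
    (cs : CoxeterSystem M W) (δ : W ≃* W) (J : Set W) (t : ℕ → Set W × W) : Prop :=
  (t 0).1 = J ∧
  (∀ n : ℕ, 1 ≤ n → (t n).1 =
    (t (n - 1)).1 ∩ (fun x => (t (n - 1)).2 * x * ((t (n - 1)).2)⁻¹) '' ((⇑δ) '' (t (n - 1)).1)) ∧
  (∀ n : ℕ, ∀ u ∈ Subgroup.closure (t n).1, cs.length (t n).2 ≤ cs.length (u * (t n).2)) ∧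
  (∀ n : ℕ, ∀ u ∈ Subgroup.closure ((⇑δ) '' (t n).1), cs.length (t n).2 ≤ cs.length ((t n).2 * u)) ∧
  (∀ n : ℕ, 1 ≤ n → ∃ x ∈ Subgroup.closure (t n).1, ∃ y ∈ Subgroup.closure ((⇑δ) '' (t (n - 1)).1),
    (t n).2 = x * (t (n - 1)).2 * y)

/-- 4.2(f): for an admissible sequence with eventual value `w_∞`, each `w_n` is the unique
element of minimal length of the double coset `W_J w_∞ W_{δ(J_n)}`. -/
theorem bedard_wn_min_double_coset
    {B W : Type*} [Group W] [Fintype B] {M : CoxeterMatrix B} (cs : CoxeterSystem M W)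
    (δ : W ≃* W) (hδ : (⇑δ) '' Set.range cs.simple = Set.range cs.simple)
    (J : Set W) (hJ : J ⊆ Set.range cs.simple)
    (t : ℕ → Set W × W) (ht : BedardAdmissible cs δ J t)
    (winf : W) (hstab : ∃ N : ℕ, ∀ n : ℕ, N ≤ n → (t n).2 = winf) :
    ∀ n : ℕ,
      (t n).2 ∈ {x : W | ∃ p ∈ Subgroup.closure J, ∃ q ∈ Subgroup.closure ((⇑δ) '' (t n).1),
        x = p * winf * q} ∧
      ∀ u ∈ {x : W | ∃ p ∈ Subgroup.closure J, ∃ q ∈ Subgroup.closure ((⇑δ) '' (t n).1),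
        x = p * winf * q}, u ≠ (t n).2 → cs.length (t n).2 < cs.length u := by
  obtain ⟨h0, hJdef, hmin1, hmin2, hrep⟩ := ht
  obtain ⟨N, hN⟩ := hstab
  -- basic facts about the sets J_n
  have hstep : ∀ n : ℕ, (t (n + 1)).1 =
      (t n).1 ∩ (fun x => (t n).2 * x * ((t n).2)⁻¹) '' ((⇑δ) '' (t n).1) := by
    intro n
    have := hJdef (n + 1) (by omega)
    simpa using this
  have hsub1 : ∀ n : ℕ, (t (n + 1)).1 ⊆ (t n).1 := by
    intro n
    rw [hstep n]
    exact Set.inter_subset_left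
  have hanti : ∀ n m : ℕ, n ≤ m → (t m).1 ⊆ (t n).1 := by
    intro n m hnm
    induction m, hnm using Nat.le_induction with
    | base => exact subset_rfl
    | succ m hm ihm => exact (hsub1 m).trans ihm
  have hsubJ : ∀ n : ℕ, (t n).1 ⊆ J := by
    intro n
    have := hanti 0 n (by omega)
    rwa [h0] at this
  have hrange : ∀ n : ℕ, (t n).1 ⊆ Set.range cs.simple := fun n => (hsubJ n).trans hJ
  have hrangeδ : ∀ n : ℕ, (⇑δ) '' (t n).1 ⊆ Set.range cs.simple := by
    intro n
    intro z hz
    rw [← hδ]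
    exact Set.image_mono (hrange n) hz
  have hndr : ∀ n : ℕ, ∀ i : B, cs.simple i ∈ (⇑δ) '' (t n).1 →
      cs.length (t n).2 ≤ cs.length ((t n).2 * cs.simple i) := by
    intro n i hi
    exact hmin2 n _ (Subgroup.subset_closure hi)
  -- the key induction: w_n has no left descent in all of J, and
  -- J ∩ (w_n δ(J_n) w_n⁻¹) ⊆ J_n
  have key : ∀ n : ℕ,
      (∀ i : B, cs.simple i ∈ J → cs.length (t n).2 ≤ cs.length (cs.simple i * (t n).2)) ∧
      (∀ z, z ∈ J → (∃ z' ∈ (⇑δ) '' (t n).1, z * (t n).2 = (t n).2 * z') → z ∈ (t n).1) := by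
    intro n
    induction n with
    | zero =>
      constructor
      · intro i hi
        exact hmin1 0 _ (Subgroup.subset_closure (by rw [h0]; exact hi))
      · intro z hz _
        rw [h0]
        exact hz
    | succ n ihn =>
      obtain ⟨hndl_n, hD_n⟩ := ihn
      obtain ⟨x, hx, y, hy, hrepeq⟩ := by
        have := hrep (n + 1) (by omega)
        simpa using this
      have hndl_sub : ∀ i : B, cs.simple i ∈ (t (n + 1)).1 →
          cs.length (t n).2 ≤ cs.length (cs.simple i * (t n).2) :=
        fun i hi => hndl_n i (hsubJ (n + 1) hi)
      obtain ⟨u, hu, v, hv, hudv, hadditive⟩ :=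
        cs.double_coset_rep (hrange (n + 1)) (hrangeδ n) hndl_sub (hndr n) x hx y hy
      have wrep : (t (n + 1)).2 = u * (t n).2 * v := by rw [hrepeq, hudv]
      have huJ : u ∈ Subgroup.closure J :=
        Subgroup.closure_mono (hsubJ (n + 1)) hu
      -- the set L of Kilmoyer
      set L : Set W := {z | z ∈ J ∧ ∃ z' ∈ (⇑δ) '' (t n).1, z * (t n).2 = (t n).2 * z'} with hL
      have hLsub : L ⊆ (t (n + 1)).1 := by
        rintro z ⟨hzJ, z', hz', heqz⟩
        rw [hstep n]
        refine ⟨hD_n z hzJ ⟨z', hz', heqz⟩, z', hz', ?_⟩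
        show (t n).2 * z' * ((t n).2)⁻¹ = z
        rw [← heqz]
        group
      have kil : ∀ x' ∈ Subgroup.closure J, ∀ y' ∈ Subgroup.closure ((⇑δ) '' (t n).1),
          x' * (t n).2 = (t n).2 * y' → x' ∈ Subgroup.closure L :=
        cs.kilmoyer hJ (hrangeδ n) hndl_n (hndr n)
      have simple_in : ∀ i : B, cs.simple i ∈ Subgroup.closure (t (n + 1)).1 →
          cs.length (t (n + 1)).2 ≤ cs.length (cs.simple i * (t (n + 1)).2) := by
        intro i hi
        exact hmin1 (n + 1) _ hi
      constructor
      · -- no left J-descent for w_{n+1}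
        intro i hiJ
        by_contra hlt
        push_neg at hlt
        obtain ⟨ρu, hρuK, hρu⟩ := cs.exists_sword (hrange (n + 1)) hu
        obtain ⟨ρd, hρdred, hρd⟩ := cs.exists_reduced_word' (t n).2
        obtain ⟨ρv, hρvK, hρv⟩ := cs.exists_sword (hrangeδ n) hv
        have hρdlen : cs.length (t n).2 = ρd.length := by rw [hρd]; exact hρdred
        have hword : cs.wordProd (ρu ++ ρd ++ ρv) = (t (n + 1)).2 := by
          rw [cs.wordProd_append, cs.wordProd_append, hρu, ← hρd, hρv, ← wrep]
        obtain ⟨k, hk, hdel⟩ := cs.exchange_left (cs.isReflection_simple i) hlt hword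
        rw [List.length_append, List.length_append] at hk
        rcases lt_or_ge k (ρu.length + ρd.length) with hk2 | hk2
        · rcases lt_or_ge k ρu.length with hk3 | hk3
          · -- deletion in the u-part
            rw [List.eraseIdx_append_of_lt_length (by rw [List.length_append]; omega),
              List.eraseIdx_append_of_lt_length hk3, cs.wordProd_append, cs.wordProd_append,
              ← hρd, hρv] at hdel
            have hcancel : cs.simple i * u = cs.wordProd (ρu.eraseIdx k) := by
              rw [wrep] at hdel
              have h6 : cs.simple i * u * ((t n).2 * v) =
                  cs.wordProd (ρu.eraseIdx k) * ((t n).2 * v) := by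
                rw [show cs.simple i * u * ((t n).2 * v) =
                    cs.simple i * (u * (t n).2 * v) by group, hdel]
                group
              exact mul_right_cancel h6
            have hsimem : cs.simple i ∈ Subgroup.closure (t (n + 1)).1 := by
              have h7 : cs.simple i = cs.wordProd (ρu.eraseIdx k) * u⁻¹ := by
                rw [← hcancel]; group
              rw [h7]
              exact mul_mem (cs.sword_mem_closure
                (fun a ha => hρuK a (List.mem_of_mem_eraseIdx ha))) (inv_mem hu)
            exact absurd (simple_in i hsimem) (by omega)
          · -- deletion in the d-part
            rw [List.eraseIdx_append_of_lt_length (by rw [List.length_append]; omega),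
              List.eraseIdx_append_of_length_le hk3, cs.wordProd_append, cs.wordProd_append,
              hρu, hρv] at hdel
            have hmid : (u⁻¹ * cs.simple i * u) * (t n).2 =
                cs.wordProd (ρd.eraseIdx (k - ρu.length)) := by
              have h6 : cs.simple i * (u * (t n).2 * v) =
                  u * cs.wordProd (ρd.eraseIdx (k - ρu.length)) * v := by
                rw [← wrep, hdel]
              have h7 := congrArg (fun z => u⁻¹ * z * v⁻¹) h6
              simpa [mul_assoc] using h7
            have hmem6 : u⁻¹ * cs.simple i * u ∈ Subgroup.closure J :=
              mul_mem (mul_mem (inv_mem huJ) (Subgroup.subset_closure hiJ)) huJ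
            have h8 := cs.length_mul_of_no_descent_left hJ hndl_n _ hmem6
            have h9 := cs.length_wordProd_le (ρd.eraseIdx (k - ρu.length))
            rw [← hmid] at h9
            have h10 : (ρd.eraseIdx (k - ρu.length)).length = ρd.length - 1 :=
              List.length_eraseIdx_of_lt (by omega)
            omega
        · -- deletion in the v-part
          rw [List.eraseIdx_append_of_length_le (by rw [List.length_append]; omega),
            cs.wordProd_append, cs.wordProd_append, hρu, ← hρd] at hdel
          set vtil := cs.wordProd (ρv.eraseIdx (k - (ρu.length + ρd.length))) with hvtil
          have hvtilmem : vtil ∈ Subgroup.closure ((⇑δ) '' (t n).1) :=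
            cs.sword_mem_closure (fun a ha => hρvK a (List.mem_of_mem_eraseIdx ha))
          have hmid : (u⁻¹ * cs.simple i * u) * (t n).2 = (t n).2 * (vtil * v⁻¹) := by
            have h6 : cs.simple i * (u * (t n).2 * v) = u * (t n).2 * vtil := by
              rw [← wrep, hdel, hvtil]
              congr 2
              rw [List.length_append]
            have h7 := congrArg (fun z => u⁻¹ * z * v⁻¹) h6
            simpa [mul_assoc] using h7
          have hmem6 : u⁻¹ * cs.simple i * u ∈ Subgroup.closure J :=
            mul_mem (mul_mem (inv_mem huJ) (Subgroup.subset_closure hiJ)) huJ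
          have h8 := kil _ hmem6 _ (mul_mem hvtilmem (inv_mem hv)) hmid
          have h9 : u⁻¹ * cs.simple i * u ∈ Subgroup.closure (t (n + 1)).1 :=
            Subgroup.closure_mono hLsub h8
          have hsimem : cs.simple i ∈ Subgroup.closure (t (n + 1)).1 := by
            have h10 : cs.simple i = u * (u⁻¹ * cs.simple i * u) * u⁻¹ := by group
            rw [h10]
            exact mul_mem (mul_mem hu h9) (inv_mem hu)
          exact absurd (simple_in i hsimem) (by omega)
      · -- the conjugation condition
        rintro z hzJ ⟨z', hz'mem, heqz⟩
        have hz'n : z' ∈ (⇑δ) '' (t n).1 := Set.image_mono (hsub1 n) hz'mem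
        have hmid : (u⁻¹ * z * u) * (t n).2 = (t n).2 * (v * z' * v⁻¹) := by
          rw [wrep] at heqz
          have h7 := congrArg (fun w => u⁻¹ * w * v⁻¹) heqz
          simpa [mul_assoc] using h7
        have hmem6 : u⁻¹ * z * u ∈ Subgroup.closure J :=
          mul_mem (mul_mem (inv_mem huJ) (Subgroup.subset_closure hzJ)) huJ
        have hmem7 : v * z' * v⁻¹ ∈ Subgroup.closure ((⇑δ) '' (t n).1) :=
          mul_mem (mul_mem hv (Subgroup.subset_closure hz'n)) (inv_mem hv)
        have h8 := kil _ hmem6 _ hmem7 hmid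
        have h9 : z ∈ Subgroup.closure (t (n + 1)).1 := by
          have h10 : z = u * (u⁻¹ * z * u) * u⁻¹ := by group
          rw [h10]
          exact mul_mem (mul_mem hu (Subgroup.closure_mono hLsub h8)) (inv_mem hu)
        obtain ⟨i₀, hi₀⟩ := hJ hzJ
        exact cs.mem_of_mem_closure_length_one (hrange (n + 1)) h9
          (by rw [← hi₀]; exact cs.length_simple i₀)
  -- coset membership of w_m for m ≥ n
  have cosmem : ∀ n m : ℕ, n ≤ m → ∃ p ∈ Subgroup.closure J,
      ∃ q ∈ Subgroup.closure ((⇑δ) '' (t n).1), (t m).2 = p * (t n).2 * q := by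
    intro n m hnm
    induction m, hnm using Nat.le_induction with
    | base => exact ⟨1, Subgroup.one_mem _, 1, Subgroup.one_mem _, by group⟩
    | succ m hm ihm =>
      obtain ⟨p, hp, q, hq, hpq⟩ := ihm
      obtain ⟨x, hx, y, hy, hrepeq⟩ := by
        have := hrep (m + 1) (by omega)
        simpa using this
      refine ⟨x * p, mul_mem (Subgroup.closure_mono (hsubJ (m + 1)) hx) hp,
        q * y, mul_mem hq (Subgroup.closure_mono (Set.image_mono (hanti n m hm)) hy), ?_⟩
      rw [hrepeq, hpq]
      group
  -- conclusion
  intro n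
  have hwm : (t (max N n)).2 = winf := hN _ (le_max_left N n)
  obtain ⟨p₀, hp₀, q₀, hq₀, hw⟩ := cosmem n (max N n) (le_max_right N n)
  rw [hwm] at hw
  obtain ⟨hndl_n, _⟩ := key n
  constructor
  · exact ⟨p₀⁻¹, inv_mem hp₀, q₀⁻¹, inv_mem hq₀, by rw [hw]; group⟩
  · rintro w ⟨p, hp, q, hq, rfl⟩ hne
    have hrw : p * winf * q = (p * p₀) * (t n).2 * (q₀ * q) := by rw [hw]; group
    have := cs.double_coset_strict_min hJ (hrangeδ n) hndl_n (hndr n)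
      (p * p₀) (mul_mem hp hp₀) (q₀ * q) (mul_mem hq₀ hq) (by rw [← hrw]; exact hne)
    rw [← hrw] at this
    exact this
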